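/- Let Γ be a lattice in ℝ^d and R a linear isometry. Then R is a similarity isometry of Γ (i.e., βRΓ ⊆ Γ for some β > 0) if and only if there exists α > 0 such that Γ ∩ αRΓ is a subgroup of finite index in Γ. -/

import Mathlib

lemma auxA {E : Type*} [AddCommGroup E]
    (Γ L : Submodule ℤ E) [Module.Free ℤ Γ] [Module.Finite ℤ Γ]
    (hle : L ≤ Γ) (he : Nonempty (L ≃ₗ[ℤ] Γ)) :
    L.toAddSubgroup.relIndex Γ.toAddSubgroup ≠ 0 := by
  classical
  set ι := Module.Free.ChooseBasisIndex ℤ Γ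
  let b : Module.Basis ι ℤ Γ := Module.Free.chooseBasis ℤ Γ
  set N : Submodule ℤ Γ := L.comap Γ.subtype with hNdef
  have hN : L.toAddSubgroup.addSubgroupOf Γ.toAddSubgroup = N.toAddSubgroup := rfl
  have hrel : L.toAddSubgroup.relIndex Γ.toAddSubgroup = N.toAddSubgroup.index := by
    rw [AddSubgroup.relIndex, hN]
  rw [hrel]
  obtain ⟨n, snf⟩ := N.smithNormalForm b
  rw [snf.toAddSubgroup_index_ne_zero_iff]
  obtain ⟨e⟩ := he
  let e2 : N ≃ₗ[ℤ] L := Submodule.comapSubtypeEquivOfLe hle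
  let bN : Module.Basis (Fin n) ℤ N := snf.bN
  let bN2 : Module.Basis ι ℤ N := b.map (e2.trans e).symm
  have := Fintype.card_congr (bN.indexEquiv bN2)
  simpa using this

-- key step: if c • T Γ ⊆ Γ with c ≠ 0, T linear equiv, then relIndex ≠ 0
lemma keystep {E : Type*} [AddCommGroup E] [Module ℝ E]
    (Γ : Submodule ℤ E) [Module.Free ℤ Γ] [Module.Finite ℤ Γ]
    (T : E ≃ₗ[ℝ] E) (c : ℝ) (hc : c ≠ 0) (hsub : ∀ γ ∈ Γ, c • T γ ∈ Γ) :
    ((Γ.map ((c • (T.toLinearMap : E →ₗ[ℝ] E)).restrictScalars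
        ℤ)).toAddSubgroup.relIndex Γ.toAddSubgroup) ≠ 0 := by
  set f := ((c • (T.toLinearMap : E →ₗ[ℝ] E)).restrictScalars ℤ) with hf
  have hfapp : ∀ x, f x = c • T x := fun x => rfl
  have hinj : Function.Injective f := by
    intro x y hxy
    have : c • T x = c • T y := by rw [← hfapp, ← hfapp, hxy]
    exact T.injective (smul_right_injective E hc this)
  have hle : Γ.map f ≤ Γ := by
    rintro _ ⟨γ, hγ, rfl⟩
    exact hsub γ hγ
  exact auxA Γ (Γ.map f) hle ⟨(Submodule.equivMapOfInjective f hinj Γ).symm⟩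

/-- R is a similarity isometry of Γ iff there is α > 0 such that Γ ∩ αRΓ is a
subgroup of finite index in Γ. -/
theorem stmt5 (d : ℕ) (Γ : Submodule ℤ (EuclideanSpace ℝ (Fin d)))
    [DiscreteTopology Γ] [IsZLattice ℝ Γ]
    (R : EuclideanSpace ℝ (Fin d) ≃ₗᵢ[ℝ] EuclideanSpace ℝ (Fin d)) :
    (∃ β > (0 : ℝ), ∀ γ ∈ Γ, β • R γ ∈ Γ) ↔
      ∃ α > (0 : ℝ),
        ((Γ.map ((α • (R.toLinearEquiv.toLinearMap :
            EuclideanSpace ℝ (Fin d) →ₗ[ℝ] EuclideanSpace ℝ (Fin d))).restrictScalars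
            ℤ)).toAddSubgroup.relIndex Γ.toAddSubgroup) ≠ 0 := by
  haveI : Module.Finite ℤ Γ := ZLattice.module_finite ℝ Γ
  haveI : Module.Free ℤ Γ := ZLattice.module_free ℝ Γ
  constructor
  · rintro ⟨β, hβ, hsub⟩
    exact ⟨β, hβ, keystep Γ R.toLinearEquiv β hβ.ne' hsub⟩
  · rintro ⟨α, hα, hidx⟩
    set H := (Γ.map ((α • (R.toLinearEquiv.toLinearMap :
        EuclideanSpace ℝ (Fin d) →ₗ[ℝ] EuclideanSpace ℝ (Fin d))).restrictScalars ℤ)) with hH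
    set m := H.toAddSubgroup.relIndex Γ.toAddSubgroup with hm
    -- m • γ ∈ H for γ ∈ Γ
    have hmem : ∀ γ ∈ Γ, (m : ℝ) • γ ∈ H := by
      intro γ hγ
      have h1 : m • (⟨γ, hγ⟩ : Γ.toAddSubgroup) ∈
          H.toAddSubgroup.addSubgroupOf Γ.toAddSubgroup :=
        AddSubgroup.nsmul_index_mem _ _
      have h2 : m • γ ∈ H := h1
      rwa [← Nat.cast_smul_eq_nsmul ℝ] at h2
    -- hence (m/α) • R.symm γ ∈ Γ for all γ ∈ Γ
    have hsub2 : ∀ γ ∈ Γ, ((m : ℝ)/α) • R.symm.toLinearEquiv γ ∈ Γ := by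
      intro γ hγ
      obtain ⟨γ', hγ', hEq⟩ := hmem γ hγ
      have hEq' : α • R γ' = (m : ℝ) • γ := hEq
      have : ((m : ℝ)/α) • (R.symm γ) = γ' := by
        apply R.injective
        rw [map_smul, LinearIsometryEquiv.apply_symm_apply]
        rw [div_eq_inv_mul, mul_smul, ← hEq', inv_smul_smul₀ hα.ne']
      have h3 : ((m : ℝ)/α) • (R.symm γ) ∈ Γ := this ▸ hγ'
      exact h3
    have hm0 : (m : ℝ) ≠ 0 := by exact_mod_cast hidx
    have hkey2 := keystep Γ R.symm.toLinearEquiv ((m : ℝ)/α)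
      (div_ne_zero hm0 hα.ne') hsub2
    set L2 := (Γ.map ((((m : ℝ)/α) • (R.symm.toLinearEquiv.toLinearMap :
        EuclideanSpace ℝ (Fin d) →ₗ[ℝ] EuclideanSpace ℝ (Fin d))).restrictScalars ℤ)) with hL2
    set k := L2.toAddSubgroup.relIndex Γ.toAddSubgroup with hk
    have hk0 : (k : ℝ) ≠ 0 := by exact_mod_cast hkey2
    refine ⟨(k : ℝ) * α / m, by positivity, fun γ hγ => ?_⟩
    have h1 : k • (⟨γ, hγ⟩ : Γ.toAddSubgroup) ∈
        L2.toAddSubgroup.addSubgroupOf Γ.toAddSubgroup :=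
      AddSubgroup.nsmul_index_mem _ _
    have h2 : k • γ ∈ L2 := h1
    rw [← Nat.cast_smul_eq_nsmul ℝ] at h2
    obtain ⟨γ', hγ', hEq⟩ := h2
    have hEq' : ((m : ℝ)/α) • R.symm γ' = (k : ℝ) • γ := hEq
    have : ((k : ℝ) * α / m) • R γ = γ' := by
      apply R.symm.injective
      rw [map_smul, LinearIsometryEquiv.symm_apply_apply]
      have hco : ((k:ℝ) * α / m) = ((m:ℝ)/α)⁻¹ * k := by
        rw [inv_div]; ring
      rw [hco, mul_smul, ← hEq', inv_smul_smul₀ (div_ne_zero hm0 hα.ne')]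
    exact this ▸ hγ'
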